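/- Consider two time periods with variables (X_1, Z_1, Y_1, X_2, Z_2). Suppose tilde{X}_1 is drawn from the conditional law of X_1 given Z_1 and tilde{X}_2 from the conditional law of X_2 given (X_1 = tilde{X}_1, Z_1, Z_2, Y_1), independently of (X_1, X_2) given (Z_1, Z_2, Y_1). If (tilde{X}_1, tilde{X}_2, Z_1, Z_2, Y_1, Y_2) is equal in distribution to (X_1, X_2, Z_1, Z_2, Y_1, Y_2), then the conditional law of Z_2 given (X_1, Y_1, Z_1) does not depend on X_1, i.e., P(Z_2 = z_2 | X_1 = x_1, Y_1 = y_1, Z_1 = z_1) = P(Z_2 = z_2 | Y_1 = y_1, Z_1 = z_1) for all values in the support. -/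
import Mathlib


open Finset

/-- **necessity, two periods.** Let `p` be the (everywhere positive) joint pmf of
`(X₁, X₂, Z₁, Z₂, Y₁, Y₂)`. The natural adaptive resampling procedure draws `tilde X₁` from the
conditional law of `X₁` given `Z₁` and `tilde X₂` from the conditional law of `X₂` given
`(X₁ = tilde X₁, Z₁, Z₂, Y₁)`, independently of `(X₁, X₂)` given `(Z₁, Z₂, Y₁, Y₂)`; the joint
pmf of `(tilde X₁, tilde X₂, Z₁, Z₂, Y₁, Y₂)` is therefore
`m(z₁,z₂,y₁,y₂) ⬝ q₁(x₁|z₁) ⬝ q₂(x₂|x₁,z₁,z₂,y₁)`. If this equals `p` everywhere, then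
`P(Z₂ = z₂ | X₁ = x₁, Y₁ = y₁, Z₁ = z₁) = P(Z₂ = z₂ | Y₁ = y₁, Z₁ = z₁)`. -/
theorem necessity_of_no_adaptation_two_periods
    {𝒳 𝒵 𝒴 : Type*} [Fintype 𝒳] [Fintype 𝒵] [Fintype 𝒴]
    (p : 𝒳 → 𝒳 → 𝒵 → 𝒵 → 𝒴 → 𝒴 → ℝ)
    (hpos : ∀ x1 x2 z1 z2 y1 y2, 0 < p x1 x2 z1 z2 y1 y2)
    (hsum : ∑ x1, ∑ x2, ∑ z1, ∑ z2, ∑ y1, ∑ y2, p x1 x2 z1 z2 y1 y2 = 1)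
    -- distributional equality of `(tilde X₁, tilde X₂, Z₁, Z₂, Y₁, Y₂)` and the original data
    (hdisteq : ∀ x1 x2 z1 z2 y1 y2,
      (∑ x1' , ∑ x2', p x1' x2' z1 z2 y1 y2) *
        ((∑ x2', ∑ z2', ∑ y1', ∑ y2', p x1 x2' z1 z2' y1' y2') /
          (∑ x1', ∑ x2', ∑ z2', ∑ y1', ∑ y2', p x1' x2' z1 z2' y1' y2')) *
        ((∑ y2', p x1 x2 z1 z2 y1 y2') /
          (∑ x2', ∑ y2', p x1 x2' z1 z2 y1 y2'))
      = p x1 x2 z1 z2 y1 y2) :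
    ∀ x1 y1 z1 z2,
      (∑ x2, ∑ y2, p x1 x2 z1 z2 y1 y2) /
          (∑ x2, ∑ z2', ∑ y2, p x1 x2 z1 z2' y1 y2)
        = (∑ x1', ∑ x2, ∑ y2, p x1' x2 z1 z2 y1 y2) /
          (∑ x1', ∑ x2, ∑ z2', ∑ y2, p x1' x2 z1 z2' y1 y2) := by
  have hX : Nonempty 𝒳 := by
    by_contra h; rw [not_nonempty_iff] at h; simp at hsum
  have hZ : Nonempty 𝒵 := by
    by_contra h; rw [not_nonempty_iff] at h; simp at hsum
  have hY : Nonempty 𝒴 := by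
    by_contra h; rw [not_nonempty_iff] at h; simp at hsum
  intro x1 y1 z1 z2
  -- positivity of any finite sum of positive terms
  have posX : ∀ (f : 𝒳 → ℝ), (∀ a, 0 < f a) → 0 < ∑ a, f a := fun f hf =>
    Finset.sum_pos (fun a _ => hf a) Finset.univ_nonempty
  have posZ : ∀ (f : 𝒵 → ℝ), (∀ a, 0 < f a) → 0 < ∑ a, f a := fun f hf =>
    Finset.sum_pos (fun a _ => hf a) Finset.univ_nonempty
  have posY : ∀ (f : 𝒴 → ℝ), (∀ a, 0 < f a) → 0 < ∑ a, f a := fun f hf =>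
    Finset.sum_pos (fun a _ => hf a) Finset.univ_nonempty
  set A : ℝ := ∑ x2, ∑ z2', ∑ y1', ∑ y2', p x1 x2 z1 z2' y1' y2' with hA
  set B : ℝ := ∑ x1', ∑ x2, ∑ z2', ∑ y1', ∑ y2', p x1' x2 z1 z2' y1' y2' with hB
  have hApos : 0 < A :=
    posX _ fun _ => posZ _ fun _ => posY _ fun _ => posY _ fun _ => hpos _ _ _ _ _ _
  have hBpos : 0 < B :=
    posX _ fun _ => posX _ fun _ => posZ _ fun _ => posY _ fun _ => posY _ fun _ =>
      hpos _ _ _ _ _ _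
  have hABpos : 0 < A / B := div_pos hApos hBpos
  -- the key identity: summing `hdisteq` over x2 and y2
  have hDw : ∀ w : 𝒵, (∑ x2, ∑ y2, p x1 x2 z1 w y1 y2)
      = (∑ x1', ∑ x2, ∑ y2, p x1' x2 z1 w y1 y2) * (A / B) := by
    intro w
    have hDwpos : 0 < ∑ x2', ∑ y2', p x1 x2' z1 w y1 y2' :=
      posX _ fun _ => posY _ fun _ => hpos _ _ _ _ _ _
    have key : (∑ x2, ∑ y2, p x1 x2 z1 w y1 y2)
        = ∑ y2, ∑ x2, ((∑ x1', ∑ x2', p x1' x2' z1 w y1 y2) * (A / B) *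
            ((∑ y2', p x1 x2 z1 w y1 y2') / (∑ x2', ∑ y2', p x1 x2' z1 w y1 y2'))) := by
      calc (∑ x2, ∑ y2, p x1 x2 z1 w y1 y2)
          = ∑ y2, ∑ x2, p x1 x2 z1 w y1 y2 := Finset.sum_comm
        _ = _ := Finset.sum_congr rfl fun y2 _ => Finset.sum_congr rfl fun x2 _ =>
            (hdisteq x1 x2 z1 w y1 y2).symm
    have inner : ∀ y2 : 𝒴, (∑ x2, ((∑ x1', ∑ x2', p x1' x2' z1 w y1 y2) * (A / B) *
            ((∑ y2', p x1 x2 z1 w y1 y2') / (∑ x2', ∑ y2', p x1 x2' z1 w y1 y2'))))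
        = (∑ x1', ∑ x2', p x1' x2' z1 w y1 y2) * (A / B) := by
      intro y2
      rw [← Finset.mul_sum, ← Finset.sum_div, div_self hDwpos.ne', mul_one]
    rw [key, Finset.sum_congr rfl fun y2 _ => inner y2, ← Finset.sum_mul]
    congr 1
    calc (∑ y2, ∑ x1', ∑ x2', p x1' x2' z1 w y1 y2)
        = ∑ x1', ∑ y2, ∑ x2', p x1' x2' z1 w y1 y2 := Finset.sum_comm
      _ = ∑ x1', ∑ x2', ∑ y2, p x1' x2' z1 w y1 y2 :=
          Finset.sum_congr rfl fun _ _ => Finset.sum_comm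
  -- rewrite both denominators using the key identity
  have hden1 : (∑ x2, ∑ z2', ∑ y2, p x1 x2 z1 z2' y1 y2)
      = (∑ z2', ∑ x1', ∑ x2, ∑ y2, p x1' x2 z1 z2' y1 y2) * (A / B) := by
    calc (∑ x2, ∑ z2', ∑ y2, p x1 x2 z1 z2' y1 y2)
        = ∑ z2', ∑ x2, ∑ y2, p x1 x2 z1 z2' y1 y2 := Finset.sum_comm
      _ = ∑ z2', (∑ x1', ∑ x2, ∑ y2, p x1' x2 z1 z2' y1 y2) * (A / B) :=
          Finset.sum_congr rfl fun w _ => hDw w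
      _ = (∑ z2', ∑ x1', ∑ x2, ∑ y2, p x1' x2 z1 z2' y1 y2) * (A / B) :=
          (Finset.sum_mul _ _ _).symm
  have hden2 : (∑ x1', ∑ x2, ∑ z2', ∑ y2, p x1' x2 z1 z2' y1 y2)
      = ∑ z2', ∑ x1', ∑ x2, ∑ y2, p x1' x2 z1 z2' y1 y2 := by
    calc (∑ x1', ∑ x2, ∑ z2', ∑ y2, p x1' x2 z1 z2' y1 y2)
        = ∑ x1', ∑ z2', ∑ x2, ∑ y2, p x1' x2 z1 z2' y1 y2 :=
          Finset.sum_congr rfl fun _ _ => Finset.sum_comm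
      _ = ∑ z2', ∑ x1', ∑ x2, ∑ y2, p x1' x2 z1 z2' y1 y2 := Finset.sum_comm
  rw [hDw z2, hden1, hden2, mul_div_mul_right _ _ hABpos.ne']
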